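/- For every local dimension d ∈ {2, 4, 8} and every unit vector ψ in ℂ^d ⊗ ℂ^d, there exist d² pairs (A_j, B_j) (j = 1, …, d²) of d×d complex unitary matrices such that the d² vectors (A_j ⊗ B_j)ψ form an orthonormal basis of ℂ^d ⊗ ℂ^d (equivalently, of ℂ^{d²}). -/

import Mathlib

open Matrix
open scoped Kronecker

/-- A family of vectors in `ℂ^κ` forms an orthonormal basis: the vectors are
pairwise orthogonal unit vectors and they span the whole space. -/
def IsONBasis {ι κ : Type*} [Fintype ι] [DecidableEq ι] [Fintype κ] (v : ι → κ → ℂ) : Prop :=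
  (∀ j j', star (v j) ⬝ᵥ v j' = if j = j' then 1 else 0) ∧
    Submodule.span ℂ (Set.range v) = ⊤

namespace Stmt0Aux
open scoped ComplexConjugate

/-- Octonion (Cayley–Dickson) sign table: `e_a * e_b = octSign a b • e_{a ^^^ b}`. -/
def octSign : Fin 8 → Fin 8 → ℤ :=
  ![![1,1,1,1,1,1,1,1], ![1,-1,1,-1,1,-1,-1,1], ![1,-1,-1,1,1,1,-1,-1], ![1,1,-1,-1,1,-1,1,-1],
    ![1,-1,-1,-1,-1,1,1,1], ![1,1,-1,1,-1,-1,-1,1], ![1,1,1,-1,-1,1,-1,-1], ![1,-1,1,1,-1,-1,1,-1]]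

variable {d : ℕ}

lemma xswap {a i a' j : ℕ} (h : a ^^^ i = a' ^^^ j) : a ^^^ j = a' ^^^ i := by
  calc a ^^^ j = a ^^^ i ^^^ (i ^^^ j) := by
        rw [Nat.xor_assoc, xor_cancel_left]
    _ = a' ^^^ j ^^^ (j ^^^ i) := by rw [h, Nat.xor_comm i j]
    _ = a' ^^^ i := by rw [Nat.xor_assoc, xor_cancel_left]

/-- Signed XOR-permutation matrix. -/
def gm (s : Fin d → Fin d → ℤ) (b : Fin d) : Matrix (Fin d) (Fin d) ℂ :=
  Matrix.of fun i j => if i.val = b.val ^^^ j.val then (s b j : ℂ) else 0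

lemma gm_entry_mul (hx : ∀ x y : Fin d, x.val ^^^ y.val < d) (s t : Fin d → Fin d → ℤ)
    (b b' : Fin d) (i j : Fin d) :
    ((gm s b)ᴴ * gm t b') i j
      = if b.val ^^^ i.val = b'.val ^^^ j.val then ((s b i : ℂ) * t b' j) else 0 := by
  classical
  rw [Matrix.mul_apply]
  have key : ∀ k : Fin d, (gm s b)ᴴ i k * gm t b' k j
      = if k = (⟨b.val ^^^ i.val, hx b i⟩ : Fin d) then
          (if b.val ^^^ i.val = b'.val ^^^ j.val then ((s b i : ℂ) * t b' j) else 0) else 0 := by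
    intro k
    simp only [conjTranspose_apply, gm, of_apply]
    by_cases hk : k = (⟨b.val ^^^ i.val, hx b i⟩ : Fin d)
    · subst hk
      by_cases h2 : b.val ^^^ i.val = b'.val ^^^ j.val
      · simp [h2]
      · simp [h2]
    · have hk' : ¬ (k.val = b.val ^^^ i.val) := fun h => hk (Fin.ext h)
      rw [if_neg hk', if_neg hk, star_zero, zero_mul]
  rw [Finset.sum_congr rfl fun k _ => key k, Finset.sum_ite_eq' Finset.univ _ _,
    if_pos (Finset.mem_univ _)]

lemma gm_mul_self (hx : ∀ x y : Fin d, x.val ^^^ y.val < d) (s : Fin d → Fin d → ℤ)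
    (hs1 : ∀ b i, s b i * s b i = 1) (b : Fin d) : (gm s b)ᴴ * gm s b = 1 := by
  ext i j
  rw [gm_entry_mul hx s s b b i j]
  by_cases h : i = j
  · subst h
    simp [Matrix.one_apply, ← Int.cast_mul, hs1]
  · have h2 : ¬ (b.val ^^^ i.val = b.val ^^^ j.val) := by
      simp only [Nat.xor_right_inj]
      exact fun hv => h (Fin.ext hv)
    simp [h2, Matrix.one_apply, h]

lemma gm_unitary (hx : ∀ x y : Fin d, x.val ^^^ y.val < d) (s : Fin d → Fin d → ℤ)
    (hs1 : ∀ b i, s b i * s b i = 1) (b : Fin d) :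
    gm s b ∈ Matrix.unitaryGroup (Fin d) ℂ := by
  rw [Matrix.mem_unitaryGroup_iff']
  rw [Matrix.star_eq_conjTranspose]
  exact gm_mul_self hx s hs1 b

/-- trivial sign function -/
def one' : Fin d → Fin d → ℤ := fun _ _ => 1

lemma pair_cond (hx : ∀ x y : Fin d, x.val ^^^ y.val < d) (sB : Fin d → Fin d → ℤ)
    (hs2 : ∀ b b' i j : Fin d, b ≠ b' → b.val ^^^ i.val = b'.val ^^^ j.val →
      sB b i * sB b' j + sB b j * sB b' i = 0)
    {a a' b b' : Fin d} (hne : (a, b) ≠ (a', b')) (i j : Fin d) :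
    ((gm one' a)ᴴ * gm one' a') i j * (((gm sB b)ᴴ * gm sB b') i j)
      + ((gm one' a)ᴴ * gm one' a') j i * (((gm sB b)ᴴ * gm sB b') j i) = 0 := by
  rw [gm_entry_mul hx, gm_entry_mul hx, gm_entry_mul hx, gm_entry_mul hx]
  by_cases hA : a.val ^^^ i.val = a'.val ^^^ j.val
  · have hA' : a.val ^^^ j.val = a'.val ^^^ i.val := xswap hA
    rw [if_pos hA, if_pos hA']
    by_cases hB : b.val ^^^ i.val = b'.val ^^^ j.val
    · have hB' : b.val ^^^ j.val = b'.val ^^^ i.val := xswap hB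
      rw [if_pos hB, if_pos hB']
      have hbb : b ≠ b' := by
        intro hb
        subst hb
        have hij : i = j := Fin.ext (Nat.xor_right_injective hB)
        subst hij
        exact hne (by rw [Prod.mk.injEq] at *; exact ⟨Fin.ext (Nat.xor_left_injective hA), rfl⟩)
      have := hs2 b b' i j hbb hB
      simp only [one']
      push_cast
      have hc : ((sB b i : ℂ) * sB b' j + (sB b j : ℂ) * sB b' i) = 0 := by
        exact_mod_cast congrArg (Int.cast : ℤ → ℂ) this
      ring_nf
      ring_nf at hc
      linear_combination hc
    · have hB' : ¬ (b.val ^^^ j.val = b'.val ^^^ i.val) := fun h => hB (xswap h)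
      rw [if_neg hB, if_neg hB', mul_zero, mul_zero, add_zero]
  · have hA' : ¬ (a.val ^^^ j.val = a'.val ^^^ i.val) := fun h => hA (xswap h)
    rw [if_neg hA, if_neg hA', zero_mul, zero_mul, add_zero]

lemma svd (M : Matrix (Fin d) (Fin d) ℂ) :
    ∃ (U V : Matrix (Fin d) (Fin d) ℂ) (σ : Fin d → ℝ),
      U ∈ Matrix.unitaryGroup (Fin d) ℂ ∧ V ∈ Matrix.unitaryGroup (Fin d) ℂ ∧
      M = U * Matrix.diagonal (fun i => (σ i : ℂ)) * Vᵀ := by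
  classical
  have hH : (Mᴴ * M).IsHermitian := Matrix.isHermitian_conjTranspose_mul_self M
  set W : Matrix (Fin d) (Fin d) ℂ := (hH.eigenvectorUnitary : Matrix (Fin d) (Fin d) ℂ) with hWdef
  have hW : W ∈ Matrix.unitaryGroup (Fin d) ℂ := hH.eigenvectorUnitary.2
  set μ : Fin d → ℝ := hH.eigenvalues with hμdef
  set N : Matrix (Fin d) (Fin d) ℂ := M * W with hNdef
  have hNN : Nᴴ * N = Matrix.diagonal (fun i => (μ i : ℂ)) := by
    have h0 : star W * (Mᴴ * M) * W = Matrix.diagonal (fun i => (μ i : ℂ)) := by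
      have h00 := hH.conjStarAlgAut_star_eigenvectorUnitary
      rw [Unitary.conjStarAlgAut_apply] at h00
      simpa [hWdef, hμdef, Function.comp_def] using h00
    calc Nᴴ * N = star W * (Mᴴ * M) * W := by
          rw [hNdef, Matrix.conjTranspose_mul, Matrix.star_eq_conjTranspose]
          noncomm_ring
      _ = Matrix.diagonal (fun i => (μ i : ℂ)) := h0
  have hμsum : ∀ i, (μ i : ℂ) = ∑ k, (Complex.normSq (N k i) : ℂ) := by
    intro i
    have h1 : (Nᴴ * N) i i = (μ i : ℂ) := by rw [hNN, Matrix.diagonal_apply_eq]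
    rw [← h1, Matrix.mul_apply]
    refine Finset.sum_congr rfl fun k _ => ?_
    rw [Matrix.conjTranspose_apply, Complex.normSq_eq_conj_mul_self]
    rfl
  have hμreal : ∀ i, μ i = ∑ k, Complex.normSq (N k i) := by
    intro i
    have h2 := hμsum i
    rw [← Complex.ofReal_sum] at h2
    exact_mod_cast h2
  have hμ0 : ∀ i, 0 ≤ μ i := fun i => (hμreal i).symm ▸
    Finset.sum_nonneg fun k _ => Complex.normSq_nonneg _
  set σ : Fin d → ℝ := fun i => Real.sqrt (μ i) with hσdef
  have hσ2 : ∀ i, σ i * σ i = μ i := fun i => Real.mul_self_sqrt (hμ0 i)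
  have hNzero : ∀ i, μ i = 0 → ∀ k, N k i = 0 := by
    intro i hi k
    have hsum : ∑ k, Complex.normSq (N k i) = 0 := by rw [← hμreal i, hi]
    have := (Finset.sum_eq_zero_iff_of_nonneg
      (fun k _ => Complex.normSq_nonneg (N k i))).mp hsum k (Finset.mem_univ k)
    exact Complex.normSq_eq_zero.mp this
  set c : Fin d → EuclideanSpace ℂ (Fin d) :=
    fun i => (WithLp.equiv 2 (Fin d → ℂ)).symm (fun k => N k i) with hcdef
  have hcinner : ∀ i j, (inner ℂ (c i) (c j) : ℂ) = if i = j then (μ i : ℂ) else 0 := by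
    intro i j
    rw [PiLp.inner_apply]
    have hterm : ∀ k, (inner ℂ ((c i) k) ((c j) k) : ℂ) = star (N k i) * N k j := by
      intro k
      simp [hcdef, RCLike.inner_apply, mul_comm]
    rw [Finset.sum_congr rfl fun k _ => hterm k]
    have h1 : (Nᴴ * N) i j = ∑ k, star (N k i) * N k j := by
      rw [Matrix.mul_apply]; rfl
    rw [← h1, hNN]
    by_cases h : i = j
    · subst h; simp
    · simp [Matrix.diagonal_apply_ne _ h, h]
  set sset : Set (Fin d) := {i | μ i ≠ 0} with hsdef
  set v : Fin d → EuclideanSpace ℂ (Fin d) := fun i => ((σ i : ℂ))⁻¹ • c i with hvdef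
  have horth : Orthonormal ℂ (sset.restrict v) := by
    rw [orthonormal_iff_ite]
    rintro ⟨i, hi⟩ ⟨j, hj⟩
    have hμi : μ i ≠ 0 := hi
    have hμj : μ j ≠ 0 := hj
    have hσi : σ i ≠ 0 := fun h => hμi (by rw [← hσ2 i, h, mul_zero])
    have hσj : σ j ≠ 0 := fun h => hμj (by rw [← hσ2 j, h, mul_zero])
    show inner ℂ (((σ i : ℂ))⁻¹ • c i) (((σ j : ℂ))⁻¹ • c j) = if (⟨i, hi⟩ : sset) = ⟨j, hj⟩ then 1 else 0
    simp only [Set.restrict_apply, hvdef, inner_smul_left, inner_smul_right]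
    rw [hcinner i j]
    by_cases h : i = j
    · subst h
      rw [if_pos rfl, if_pos rfl, map_inv₀, Complex.conj_ofReal]
      have hσi' : (σ i : ℂ) ≠ 0 := Complex.ofReal_ne_zero.mpr hσi
      field_simp
      exact_mod_cast (hσ2 i ▸ (sq (σ i))).symm
    · have hij : (⟨i, hi⟩ : sset) ≠ ⟨j, hj⟩ := fun hc => h (by injection hc)
      rw [if_neg h, if_neg hij]
      ring
  have hcard : Module.finrank ℂ (EuclideanSpace ℂ (Fin d)) = Fintype.card (Fin d) := by
    simp
  obtain ⟨b, hb⟩ := horth.exists_orthonormalBasis_extension_of_card_eq hcard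
  set U : Matrix (Fin d) (Fin d) ℂ := Matrix.of (fun k i => (b i) k) with hUdef
  have hU : U ∈ Matrix.unitaryGroup (Fin d) ℂ := by
    rw [Matrix.mem_unitaryGroup_iff']
    ext i j
    rw [Matrix.mul_apply]
    have hterm : ∀ k, (star U) i k * U k j = star ((b i) k) * (b j) k := by
      intro k
      rw [Matrix.star_apply]
      rfl
    rw [Finset.sum_congr rfl fun k _ => hterm k]
    have h2 : (inner ℂ (b i) (b j) : ℂ) = ∑ k, star ((b i) k) * (b j) k := by
      rw [PiLp.inner_apply]
      refine Finset.sum_congr rfl fun k _ => ?_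
      simp [RCLike.inner_apply, mul_comm]
    rw [← h2, orthonormal_iff_ite.mp b.orthonormal i j, Matrix.one_apply]
  have hNU : N = U * Matrix.diagonal (fun i => (σ i : ℂ)) := by
    ext k i
    rw [Matrix.mul_diagonal]
    by_cases hi : μ i ≠ 0
    · have hbi : b i = v i := hb i hi
      have hσi0 : σ i ≠ 0 := fun h => hi (by rw [← hσ2 i, h, mul_zero])
      have hσi : (σ i : ℂ) ≠ 0 := Complex.ofReal_ne_zero.mpr hσi0
      have hU2 : U k i = ((σ i : ℂ))⁻¹ * N k i := by
        rw [hUdef]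
        show (b i) k = _
        rw [hbi]
        rfl
      rw [hU2]
      field_simp
    · push_neg at hi
      rw [hNzero i hi k]
      have hz : σ i = 0 := by rw [hσdef]; simp [hi]
      rw [hz]
      simp
  refine ⟨U, (star W)ᵀ, σ, hU, ?_, ?_⟩
  · rw [Matrix.mem_unitaryGroup_iff']
    have h1 : star W * W = 1 := Matrix.mem_unitaryGroup_iff'.mp hW
    have hsv : star ((star W)ᵀ) = Wᵀ := by
      ext i j
      simp [Matrix.star_apply, Matrix.transpose_apply]
    rw [hsv, ← Matrix.transpose_mul, h1, Matrix.transpose_one]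
  · have h2 : W * star W = 1 := Matrix.mem_unitaryGroup_iff.mp hW
    have hM : M = N * star W := by
      rw [hNdef, Matrix.mul_assoc, h2, Matrix.mul_one]
    rw [hM, hNU, Matrix.transpose_transpose]

/-- view a matrix as a vector on the product index set -/
def vecf (X : Matrix (Fin d) (Fin d) ℂ) : Fin d × Fin d → ℂ := fun p => X p.1 p.2

lemma kron_mulVec (A B : Matrix (Fin d) (Fin d) ℂ) (ψ : Fin d × Fin d → ℂ) :
    (A ⊗ₖ B) *ᵥ ψ = vecf (A * Matrix.of (fun i j => ψ (i, j)) * Bᵀ) := by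
  funext p
  obtain ⟨k, l⟩ := p
  show ∑ q : Fin d × Fin d, (A ⊗ₖ B) (k, l) q * ψ q = (A * Matrix.of (fun i j => ψ (i, j)) * Bᵀ) k l
  rw [Matrix.mul_apply]
  rw [Fintype.sum_prod_type]
  rw [Finset.sum_comm]
  refine Finset.sum_congr rfl fun x _ => ?_
  rw [Matrix.mul_apply, Finset.sum_mul]
  refine Finset.sum_congr rfl fun y _ => ?_
  simp only [Matrix.kroneckerMap_apply, Matrix.of_apply, Matrix.transpose_apply]
  ring

lemma dot_vecf (X Y : Matrix (Fin d) (Fin d) ℂ) :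
    star (vecf X) ⬝ᵥ vecf Y = ∑ k, ∑ l, conj (X k l) * Y k l := by
  show ∑ p : Fin d × Fin d, star (vecf X) p * vecf Y p = _
  rw [Fintype.sum_prod_type]
  rfl

lemma sum4_reorder (F : Fin d → Fin d → Fin d → Fin d → ℂ) :
    ∑ k, ∑ l, ∑ i, ∑ j, F k l i j = ∑ i, ∑ j, ∑ k, ∑ l, F k l i j := by
  have h1 : ∀ k : Fin d, ∑ l, ∑ i, ∑ j, F k l i j = ∑ i, ∑ l, ∑ j, F k l i j :=
    fun k => Finset.sum_comm
  rw [Finset.sum_congr rfl fun k _ => h1 k, Finset.sum_comm]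
  refine Finset.sum_congr rfl fun i _ => ?_
  have h2 : ∀ k : Fin d, ∑ l, ∑ j, F k l i j = ∑ j, ∑ l, F k l i j := fun k => Finset.sum_comm
  rw [Finset.sum_congr rfl fun k _ => h2 k]
  exact Finset.sum_comm

lemma workhorse (σ : Fin d → ℝ) (P Q P' Q' : Matrix (Fin d) (Fin d) ℂ) :
    star (vecf (P * Matrix.diagonal (fun i => (σ i : ℂ)) * Qᵀ)) ⬝ᵥ
      vecf (P' * Matrix.diagonal (fun i => (σ i : ℂ)) * Q'ᵀ)
    = ∑ i, ∑ j, ((σ i : ℂ) * (σ j : ℂ)) * ((Pᴴ * P') i j * ((Qᴴ * Q') i j)) := by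
  have hent : ∀ (R S : Matrix (Fin d) (Fin d) ℂ) (k l : Fin d),
      (R * Matrix.diagonal (fun i => (σ i : ℂ)) * Sᵀ) k l = ∑ i, R k i * (σ i : ℂ) * S l i := by
    intro R S k l
    rw [Matrix.mul_apply]
    refine Finset.sum_congr rfl fun i _ => ?_
    rw [Matrix.mul_diagonal, Matrix.transpose_apply]
  rw [dot_vecf]
  have step1 : ∀ k l : Fin d,
      conj ((P * Matrix.diagonal (fun i => (σ i : ℂ)) * Qᵀ) k l)
        * ((P' * Matrix.diagonal (fun i => (σ i : ℂ)) * Q'ᵀ) k l)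
      = ∑ i, ∑ j, (conj (P k i) * (σ i : ℂ) * conj (Q l i)) * (P' k j * (σ j : ℂ) * Q' l j) := by
    intro k l
    rw [hent, hent, map_sum, Finset.sum_mul_sum]
    refine Finset.sum_congr rfl fun i _ => Finset.sum_congr rfl fun j _ => ?_
    simp only [_root_.map_mul, Complex.conj_ofReal]
  calc ∑ k, ∑ l, conj ((P * Matrix.diagonal (fun i => (σ i : ℂ)) * Qᵀ) k l)
        * ((P' * Matrix.diagonal (fun i => (σ i : ℂ)) * Q'ᵀ) k l)
      = ∑ k, ∑ l, ∑ i, ∑ j,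
          (conj (P k i) * (σ i : ℂ) * conj (Q l i)) * (P' k j * (σ j : ℂ) * Q' l j) := by
        exact Finset.sum_congr rfl fun k _ => Finset.sum_congr rfl fun l _ => step1 k l
    _ = ∑ i, ∑ j, ∑ k, ∑ l,
          (conj (P k i) * (σ i : ℂ) * conj (Q l i)) * (P' k j * (σ j : ℂ) * Q' l j) :=
        sum4_reorder _
    _ = ∑ i, ∑ j, ((σ i : ℂ) * (σ j : ℂ)) *
          ((∑ k, conj (P k i) * P' k j) * (∑ l, conj (Q l i) * Q' l j)) := by
        refine Finset.sum_congr rfl fun i _ => Finset.sum_congr rfl fun j _ => ?_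
        rw [Finset.sum_mul_sum, Finset.mul_sum]
        refine Finset.sum_congr rfl fun k _ => ?_
        rw [Finset.mul_sum]
        refine Finset.sum_congr rfl fun l _ => ?_
        ring
    _ = ∑ i, ∑ j, ((σ i : ℂ) * (σ j : ℂ)) * ((Pᴴ * P') i j * ((Qᴴ * Q') i j)) := by
        refine Finset.sum_congr rfl fun i _ => Finset.sum_congr rfl fun j _ => ?_
        rw [Matrix.mul_apply, Matrix.mul_apply]
        rfl

lemma isONBasis_of_ortho {ι κ : Type*} [Fintype ι] [DecidableEq ι] [Fintype κ]
    (v : ι → κ → ℂ) (hcard : Fintype.card ι = Fintype.card κ)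
    (h : ∀ j j', star (v j) ⬝ᵥ v j' = if j = j' then 1 else 0) : IsONBasis v := by
  refine ⟨h, ?_⟩
  set w : ι → EuclideanSpace ℂ κ := fun j => (WithLp.equiv 2 (κ → ℂ)).symm (v j) with hw
  have hwON : Orthonormal ℂ w := by
    rw [orthonormal_iff_ite]
    intro j j'
    have h2 : (inner ℂ (w j) (w j') : ℂ) = star (v j) ⬝ᵥ v j' := by
      rw [PiLp.inner_apply]
      refine Finset.sum_congr rfl fun p _ => ?_
      rw [RCLike.inner_apply, mul_comm]
      rfl
    rw [h2]
    exact h j j'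
  have hLI2 : LinearIndependent ℂ v := by
    have hv : v = (WithLp.linearEquiv 2 ℂ (κ → ℂ)).toLinearMap ∘ w := rfl
    rw [hv]
    exact hwON.linearIndependent.map' _ (LinearMap.ker_eq_bot_of_injective
      (WithLp.linearEquiv 2 ℂ (κ → ℂ)).injective)
  have hcard2 : Fintype.card ι = Module.finrank ℂ (κ → ℂ) := by
    rw [hcard, Module.finrank_fintype_fun_eq_card]
  exact hLI2.span_eq_top_of_card_eq_finrank' hcard2

lemma main (d : ℕ) (hx : ∀ x y : Fin d, x.val ^^^ y.val < d)
    (sB : Fin d → Fin d → ℤ)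
    (hs1 : ∀ b i, sB b i * sB b i = 1)
    (hs2 : ∀ b b' i j : Fin d, b ≠ b' → b.val ^^^ i.val = b'.val ^^^ j.val →
      sB b i * sB b' j + sB b j * sB b' i = 0)
    (ψ : Fin d × Fin d → ℂ) (hψ : star ψ ⬝ᵥ ψ = 1) :
    ∃ A B : Fin (d ^ 2) → Matrix (Fin d) (Fin d) ℂ,
      (∀ j, A j ∈ Matrix.unitaryGroup (Fin d) ℂ ∧ B j ∈ Matrix.unitaryGroup (Fin d) ℂ) ∧
      IsONBasis (fun j => (A j ⊗ₖ B j) *ᵥ ψ) := by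
  classical
  obtain ⟨U, V, σ, hU, hV, hM⟩ := svd (Matrix.of fun i j => ψ (i, j))
  have hψv : ψ = vecf (Matrix.of fun i j => ψ (i, j)) := rfl
  have hone1 : ∀ b i : Fin d, one' b i * one' b i = 1 := fun _ _ => rfl
  set e : Fin (d ^ 2) ≃ Fin d × Fin d := (finCongr (by ring)).trans finProdFinEquiv.symm
    with hedef
  set A : Fin (d ^ 2) → Matrix (Fin d) (Fin d) ℂ :=
    fun j => gm one' (e j).1 * star U with hAdef
  set B : Fin (d ^ 2) → Matrix (Fin d) (Fin d) ℂ :=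
    fun j => gm sB (e j).2 * star V with hBdef
  have hU' : star U * U = 1 := Matrix.mem_unitaryGroup_iff'.mp hU
  have hV' : star V * V = 1 := Matrix.mem_unitaryGroup_iff'.mp hV
  have hVt : Vᵀ * (star V)ᵀ = 1 := by
    rw [Matrix.star_eq_conjTranspose, ← Matrix.transpose_mul,
      ← Matrix.star_eq_conjTranspose, hV', Matrix.transpose_one]
  have hvec : ∀ j, (A j ⊗ₖ B j) *ᵥ ψ
      = vecf (gm one' (e j).1 * Matrix.diagonal (fun i => (σ i : ℂ)) * (gm sB (e j).2)ᵀ) := by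
    intro j
    rw [kron_mulVec]
    congr 1
    rw [hM, hAdef, hBdef]
    simp only [Matrix.transpose_mul, Matrix.mul_assoc]
    rw [← Matrix.mul_assoc (star U) U, hU', Matrix.one_mul,
      ← Matrix.mul_assoc Vᵀ ((star V)ᵀ), hVt, Matrix.one_mul]
  have hdot : ∀ j j', star ((A j ⊗ₖ B j) *ᵥ ψ) ⬝ᵥ ((A j' ⊗ₖ B j') *ᵥ ψ)
      = ∑ i, ∑ k, ((σ i : ℂ) * (σ k : ℂ)) *
          (((gm one' (e j).1)ᴴ * gm one' (e j').1) i k *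
            (((gm sB (e j).2)ᴴ * gm sB (e j').2) i k)) := by
    intro j j'
    rw [hvec, hvec, workhorse]
  have honesum : ∀ i : Fin d, ∑ k, ((σ i : ℂ) * (σ k : ℂ)) *
      ((1 : Matrix (Fin d) (Fin d) ℂ) i k * (1 : Matrix (Fin d) (Fin d) ℂ) i k)
      = (σ i : ℂ) * (σ i : ℂ) := by
    intro i
    rw [Finset.sum_eq_single i]
    · simp [Matrix.one_apply]
    · intro k _ hk
      rw [Matrix.one_apply_ne (Ne.symm hk)]
      ring
    · intro hi
      exact absurd (Finset.mem_univ i) hi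
  have hsig : ∑ i, (σ i : ℂ) * (σ i : ℂ) = 1 := by
    have hU1 : Uᴴ * U = 1 := by
      rw [← Matrix.star_eq_conjTranspose]; exact hU'
    have hV1 : Vᴴ * V = 1 := by
      rw [← Matrix.star_eq_conjTranspose]; exact hV'
    have h1 : star ψ ⬝ᵥ ψ = ∑ i, ∑ k, ((σ i : ℂ) * (σ k : ℂ)) *
        ((Uᴴ * U) i k * ((Vᴴ * V) i k)) := by
      conv_lhs => rw [hψv, hM]
      exact workhorse σ U V U V
    rw [hU1, hV1, hψ] at h1
    rw [h1]
    exact Finset.sum_congr rfl fun i _ => (honesum i).symm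
  have hON : ∀ j j', star ((A j ⊗ₖ B j) *ᵥ ψ) ⬝ᵥ ((A j' ⊗ₖ B j') *ᵥ ψ)
      = if j = j' then 1 else 0 := by
    intro j j'
    rw [hdot]
    by_cases h : j = j'
    · subst h
      rw [if_pos rfl, gm_mul_self hx one' hone1, gm_mul_self hx sB hs1]
      rw [Finset.sum_congr rfl fun i _ => honesum i]
      exact hsig
    · rw [if_neg h]
      have hepair : ((e j).1, (e j).2) ≠ ((e j').1, (e j').2) := by
        intro hc
        exact h (e.injective (by simpa using hc))
      set S := (gm one' (e j).1)ᴴ * gm one' (e j').1 with hSdef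
      set T := (gm sB (e j).2)ᴴ * gm sB (e j').2 with hTdef
      have hzero : ∀ i k : Fin d, ((σ i : ℂ) * (σ k : ℂ)) * (S i k * T i k)
          + ((σ k : ℂ) * (σ i : ℂ)) * (S k i * T k i) = 0 := by
        intro i k
        have hp := pair_cond hx sB hs2 hepair i k
        rw [← hSdef, ← hTdef] at hp
        linear_combination ((σ i : ℂ) * (σ k : ℂ)) * hp
      have hswap : (∑ i, ∑ k, ((σ i : ℂ) * (σ k : ℂ)) * (S i k * T i k))
          = ∑ i, ∑ k, ((σ k : ℂ) * (σ i : ℂ)) * (S k i * T k i) := Finset.sum_comm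
      have hsum : (∑ i, ∑ k, ((σ i : ℂ) * (σ k : ℂ)) * (S i k * T i k))
          + (∑ i, ∑ k, ((σ i : ℂ) * (σ k : ℂ)) * (S i k * T i k)) = 0 := by
        nth_rewrite 2 [hswap]
        rw [← Finset.sum_add_distrib]
        rw [show (0 : ℂ) = ∑ _i : Fin d, (0 : ℂ) by simp]
        refine Finset.sum_congr rfl fun i _ => ?_
        rw [← Finset.sum_add_distrib]
        rw [show (0 : ℂ) = ∑ _k : Fin d, (0 : ℂ) by simp]
        refine Finset.sum_congr rfl fun k _ => ?_
        linear_combination hzero i k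
      exact add_self_eq_zero.mp hsum
  have hcard : Fintype.card (Fin (d ^ 2)) = Fintype.card (Fin d × Fin d) := by
    simp [sq]
  exact ⟨A, B, fun j => ⟨mul_mem (gm_unitary hx one' hone1 _) (Unitary.star_mem hU),
    mul_mem (gm_unitary hx sB hs1 _) (Unitary.star_mem hV)⟩,
    isONBasis_of_ortho _ hcard hON⟩

end Stmt0Aux

theorem stmt0 (d : ℕ) (hd : d = 2 ∨ d = 4 ∨ d = 8)
    (ψ : Fin d × Fin d → ℂ) (hψ : star ψ ⬝ᵥ ψ = 1) :
    ∃ A B : Fin (d ^ 2) → Matrix (Fin d) (Fin d) ℂ,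
      (∀ j, A j ∈ Matrix.unitaryGroup (Fin d) ℂ ∧ B j ∈ Matrix.unitaryGroup (Fin d) ℂ) ∧
      IsONBasis (fun j => (A j ⊗ₖ B j) *ᵥ ψ) := by
  obtain h | h | h := hd
  · subst h
    exact Stmt0Aux.main 2 (by decide)
      (fun b i => Stmt0Aux.octSign (b.castLE (by norm_num)) (i.castLE (by norm_num)))
      (by decide) (by decide) ψ hψ
  · subst h
    exact Stmt0Aux.main 4 (by decide)
      (fun b i => Stmt0Aux.octSign (b.castLE (by norm_num)) (i.castLE (by norm_num)))
      (by decide) (by decide) ψ hψ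
  · subst h
    exact Stmt0Aux.main 8 (by decide)
      (fun b i => Stmt0Aux.octSign (b.castLE (by norm_num)) (i.castLE (by norm_num)))
      (by decide) (by decide) ψ hψ
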